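/- arXiv:1911.05644 — 2 statements merged into one kernel-verified Lean document; each statement's English description precedes it below -/
import Mathlib

section
/- The function f(x) = log₂(1 + x^{−η}) is convex on (0, ∞) for every η ≥ 1. -/
open Real

lemma softplus_pos (t : ℝ) : 0 < 1 + Real.exp t := by positivity

lemma softplus_hasDerivAt (t : ℝ) :
    HasDerivAt (fun t : ℝ => Real.log (1 + Real.exp t)) (Real.exp t / (1 + Real.exp t)) t := by
  have h : HasDerivAt (fun t : ℝ => 1 + Real.exp t) (Real.exp t) t :=
    (Real.hasDerivAt_exp t).const_add 1
  exact h.log (softplus_pos t).ne'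

lemma softplus_deriv :
    deriv (fun t : ℝ => Real.log (1 + Real.exp t)) =
      fun t => Real.exp t / (1 + Real.exp t) := by
  funext t
  exact (softplus_hasDerivAt t).deriv

lemma softplus_deriv2_hasDerivAt (t : ℝ) :
    HasDerivAt (fun t : ℝ => Real.exp t / (1 + Real.exp t))
      (Real.exp t / (1 + Real.exp t) ^ 2) t := by
  have h1 : HasDerivAt (fun t : ℝ => 1 + Real.exp t) (Real.exp t) t :=
    (Real.hasDerivAt_exp t).const_add 1
  have h : HasDerivAt (fun t : ℝ => Real.exp t / (1 + Real.exp t)) _ t :=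
    (Real.hasDerivAt_exp t).div h1 (softplus_pos t).ne'
  convert h using 1
  ring

lemma softplus_convexOn :
    ConvexOn ℝ Set.univ (fun t : ℝ => Real.log (1 + Real.exp t)) := by
  apply convexOn_univ_of_deriv2_nonneg
  · exact fun t => (softplus_hasDerivAt t).differentiableAt
  · rw [softplus_deriv]
    exact fun t => (softplus_deriv2_hasDerivAt t).differentiableAt
  · intro t
    rw [Function.iterate_succ, Function.iterate_one, Function.comp_apply, softplus_deriv]
    rw [(softplus_deriv2_hasDerivAt t).deriv]
    positivity

lemma softplus_monotone : Monotone (fun t : ℝ => Real.log (1 + Real.exp t)) := by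
  intro a b hab
  exact Real.log_le_log (softplus_pos a) (by simpa using Real.exp_le_exp.2 hab)

lemma neg_log_convexOn (η : ℝ) (hη : 0 ≤ η) :
    ConvexOn ℝ (Set.Ioi (0 : ℝ)) (fun x : ℝ => η * (-Real.log x)) := by
  have h : ConvexOn ℝ (Set.Ioi (0 : ℝ)) (fun x : ℝ => -Real.log x) :=
    strictConcaveOn_log_Ioi.concaveOn.neg
  simpa using h.smul hη

/-- The capacity function `f(x) = log₂(1 + x^{-η})` is convex on `(0, ∞)` for `η ≥ 1`. -/
theorem capacity_convexOn (η : ℝ) (hη : 1 ≤ η) :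
    ConvexOn ℝ (Set.Ioi (0 : ℝ)) (fun x : ℝ => Real.logb 2 (1 + x ^ (-η))) := by
  have hη0 : (0:ℝ) ≤ η := le_trans zero_le_one hη
  -- inner function
  have hinner := neg_log_convexOn η hη0
  have hcomp : ConvexOn ℝ (Set.Ioi (0 : ℝ))
      ((fun t : ℝ => Real.log (1 + Real.exp t)) ∘ (fun x : ℝ => η * (-Real.log x))) :=
    ⟨hinner.1, fun x hx y hy a b ha hb hab =>
      (softplus_monotone (hinner.2 hx hy ha hb hab)).trans
        (softplus_convexOn.2 (Set.mem_univ _) (Set.mem_univ _) ha hb hab)⟩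
  have heq : ConvexOn ℝ (Set.Ioi (0 : ℝ)) (fun x : ℝ => Real.log (1 + x ^ (-η))) := by
    apply hcomp.congr
    intro x hx
    simp only [Function.comp_apply]
    rw [Real.rpow_def_of_pos hx]
    ring_nf
  have := heq.smul (c := (Real.log 2)⁻¹) (by positivity)
  apply this.congr
  intro x hx
  simp [Real.logb, div_eq_inv_mul]
end

section
/- Let G(l) satisfy Mézard–Parisi's fixed point equation in dimension d = 1: G(l) = 2∫_{−l}^∞ e^{−G(y)} dy for all l ∈ ℝ, with G nonnegative and nondecreasing. Then G(l) = log(1 + e^{2l}) is a solution, and the corresponding matching length constant L₁ = 2∫_{−∞}^∞ G(l) e^{−G(l)} dl equals π²/6. -/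
open Real MeasureTheory

/-- exp(-G(y)) rewritten as an explicit rational function of exp. -/
lemma mp_exp_neg_G (y : ℝ) :
    Real.exp (-(Real.log (1 + Real.exp (2 * y)))) = (1 + Real.exp (2 * y))⁻¹ := by
  rw [Real.exp_neg, Real.exp_log (by positivity)]

/-- Integrability of (1+e^{2y})⁻¹ on right half-lines. -/
lemma mp_integrable_inv (a : ℝ) :
    IntegrableOn (fun y : ℝ => (1 + Real.exp (2 * y))⁻¹) (Set.Ioi a) := by
  refine (exp_neg_integrableOn_Ioi a (by norm_num : (0:ℝ) < 2)).mono' ?_ ?_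
  · exact (Continuous.inv₀ (by continuity) (fun y => by positivity)).aestronglyMeasurable
  · filter_upwards with y
    rw [Real.norm_eq_abs, abs_of_pos (by positivity)]
    rw [show -2 * y = -(2 * y) by ring, Real.exp_neg]
    exact inv_anti₀ (Real.exp_pos _) (by linarith [Real.exp_pos (2 * y)])

set_option maxHeartbeats 1000000 in
/-- Part 1 core computation. -/
lemma mp_part1 (l : ℝ) :
    ∫ y in Set.Ioi (-l), (1 + Real.exp (2 * y))⁻¹ = Real.log (1 + Real.exp (2 * l)) / 2 := by
  have hderiv : ∀ y ∈ Set.Ici (-l),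
      HasDerivAt (fun y : ℝ => -(1/2) * Real.log (Real.exp (-2 * y) + 1))
        ((1 + Real.exp (2 * y))⁻¹) y := by
    intro y _
    have h1 : HasDerivAt (fun y : ℝ => Real.exp (-2 * y) + 1)
        (Real.exp (-2 * y) * (-2)) y := by
      simpa using ((Real.hasDerivAt_exp _).comp y ((hasDerivAt_id y).const_mul (-2))).add_const 1
    have h2 := (h1.log (by positivity)).const_mul (-(1/2 : ℝ))
    refine h2.congr_deriv ?_; symm
    have hE : Real.exp (-2 * y) = (Real.exp (2 * y))⁻¹ := by
      rw [show -2 * y = -(2 * y) by ring, Real.exp_neg]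
    rw [hE]
    have hp := Real.exp_pos (2 * y)
    field_simp
  have htend : Filter.Tendsto (fun y : ℝ => -(1/2) * Real.log (Real.exp (-2 * y) + 1))
      Filter.atTop (nhds 0) := by
    have h1 : Filter.Tendsto (fun y : ℝ => Real.exp (-2 * y)) Filter.atTop (nhds 0) := by
      apply Real.tendsto_exp_atBot.comp
      have h := Filter.tendsto_neg_atTop_atBot.comp
          (Filter.tendsto_id.const_mul_atTop (by norm_num : (0:ℝ) < 2))
      exact h.congr (fun y => by simp [Function.comp])
    have h2 : Filter.Tendsto (fun y : ℝ => Real.log (Real.exp (-2 * y) + 1))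
        Filter.atTop (nhds 0) := by
      have h1' : Filter.Tendsto (fun y : ℝ => Real.exp (-2 * y) + 1)
          Filter.atTop (nhds 1) := by
        have h := h1.add_const 1
        rwa [zero_add] at h
      have := (Real.continuousAt_log (by norm_num : (1:ℝ) ≠ 0)).tendsto.comp h1'
      simpa [Function.comp_def] using this
    simpa using h2.const_mul (-(1/2 : ℝ))
  have := integral_Ioi_of_hasDerivAt_of_tendsto' hderiv (mp_integrable_inv (-l)) htend
  rw [this]
  have : Real.exp (-2 * -l) + 1 = 1 + Real.exp (2 * l) := by
    rw [show -2 * -l = 2 * l by ring]; ring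
  rw [this]
  ring


/-- The summand functions for the Basel-series decomposition. -/
noncomputable def mpH (n : ℕ) (t : ℝ) : ℝ := t * Real.exp (-(((n : ℝ) + 1) * t))

lemma mp_integrable_H (n : ℕ) : IntegrableOn (mpH n) (Set.Ioi 0) := by
  refine (Real.GammaIntegral_convergent (by norm_num : (0:ℝ) < 2)).mono' ?_ ?_
  · exact (continuous_id.mul (by continuity)).aestronglyMeasurable
  · filter_upwards [self_mem_ae_restrict measurableSet_Ioi] with t ht
    have ht0 : (0:ℝ) < t := ht
    have h1 : Real.exp (-(((n : ℝ) + 1) * t)) ≤ Real.exp (-t) := by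
      apply Real.exp_le_exp.mpr
      nlinarith [Nat.cast_nonneg (α := ℝ) n]
    unfold mpH
    rw [Real.norm_eq_abs, abs_of_nonneg (by positivity)]
    calc t * Real.exp (-(((n : ℝ) + 1) * t)) ≤ t * Real.exp (-t) :=
          mul_le_mul_of_nonneg_left h1 ht0.le
      _ = Real.exp (-t) * t ^ (2 - 1 : ℝ) := by
          rw [show (2 - 1 : ℝ) = 1 by norm_num, Real.rpow_one]; ring

lemma mp_value_H (n : ℕ) :
    ∫ t in Set.Ioi 0, mpH n t = 1 / ((n : ℝ) + 1) ^ 2 := by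
  have hr : (0:ℝ) < (n : ℝ) + 1 := by positivity
  have := Real.integral_rpow_mul_exp_neg_mul_Ioi (a := 2) (r := (n : ℝ) + 1)
    (by norm_num) hr
  rw [Real.Gamma_two, mul_one] at this
  have heq : ∀ t ∈ Set.Ioi (0:ℝ),
      t ^ (2 - 1 : ℝ) * Real.exp (-(((n : ℝ) + 1) * t)) = mpH n t := by
    intro t _
    rw [show (2 - 1 : ℝ) = 1 by norm_num, Real.rpow_one]; rfl
  rw [setIntegral_congr_fun measurableSet_Ioi heq] at this
  rw [this, show ((2:ℝ)) = ((2:ℕ) : ℝ) by norm_num, Real.rpow_natCast]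
  rw [div_pow, one_pow]

lemma mp_sum (t : ℝ) (ht : 0 < t) :
    ∑' n : ℕ, mpH n t = t * Real.exp (-t) / (1 - Real.exp (-t)) := by
  set r := Real.exp (-t) with hr
  have hr0 : 0 ≤ r := (Real.exp_pos _).le
  have hr1 : r < 1 := Real.exp_lt_one_iff.mpr (by linarith)
  have key : ∀ n : ℕ, mpH n t = (t * r) * r ^ n := by
    intro n
    unfold mpH
    have h1 : -(((n : ℝ) + 1) * t) = ((n + 1 : ℕ) : ℝ) * (-t) := by push_cast; ring
    rw [h1, Real.exp_nat_mul, ← hr, pow_succ]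
    ring
  calc ∑' n : ℕ, mpH n t = ∑' n : ℕ, (t * r) * r ^ n := by
        exact tsum_congr key
    _ = (t * r) * ∑' n : ℕ, r ^ n := tsum_mul_left
    _ = (t * r) * (1 - r)⁻¹ := by rw [tsum_geometric_of_lt_one hr0 hr1]
    _ = t * r / (1 - r) := by ring

lemma mp_hasSum_basel : HasSum (fun n : ℕ => 1 / ((n : ℝ) + 1) ^ 2) (Real.pi ^ 2 / 6) := by
  have h := (hasSum_nat_add_iff (f := fun n : ℕ => (1 : ℝ) / (n : ℝ) ^ 2) 1).mpr
    (by simpa using hasSum_zeta_two)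
  simpa [Nat.cast_add] using h

lemma mp_basel : ∑' n : ℕ, 1 / ((n : ℝ) + 1) ^ 2 = Real.pi ^ 2 / 6 :=
  mp_hasSum_basel.tsum_eq

set_option maxHeartbeats 1000000 in
lemma mp_part2 :
    2 * ∫ l : ℝ, Real.log (1 + Real.exp (2 * l)) *
        Real.exp (-(Real.log (1 + Real.exp (2 * l)))) = Real.pi ^ 2 / 6 := by
  set φ : ℝ → ℝ := fun l => Real.log (1 + Real.exp (2 * l)) with hφ
  set φ' : ℝ → ℝ := fun l => 2 * Real.exp (2 * l) / (1 + Real.exp (2 * l)) with hφ'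
  set g : ℝ → ℝ := fun t => t * Real.exp (-t) / (1 - Real.exp (-t)) with hg
  have hφderiv : ∀ l ∈ (Set.univ : Set ℝ),
      HasDerivWithinAt φ (φ' l) Set.univ l := by
    intro l _
    have h1 : HasDerivAt (fun l : ℝ => 1 + Real.exp (2 * l)) (Real.exp (2 * l) * 2) l := by
      simpa using ((Real.hasDerivAt_exp _).comp l ((hasDerivAt_id l).const_mul 2)).const_add 1
    have h2 := h1.log (by positivity)
    refine HasDerivAt.hasDerivWithinAt ?_
    refine h2.congr_deriv ?_; symm
    simp only [hφ']; ring
  have hφinj : Set.InjOn φ Set.univ := by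
    have hmono : StrictMono φ := by
      intro a b hab
      apply Real.log_lt_log (by positivity)
      have := Real.exp_lt_exp.mpr (mul_lt_mul_of_pos_left hab (by norm_num : (0:ℝ) < 2))
      linarith
    exact hmono.injective.injOn
  have hφimg : φ '' Set.univ = Set.Ioi 0 := by
    rw [Set.image_univ]
    ext t
    simp only [Set.mem_range, Set.mem_Ioi]
    constructor
    · rintro ⟨l, rfl⟩
      exact Real.log_pos (by linarith [Real.exp_pos (2 * l)])
    · intro ht
      refine ⟨(1/2) * Real.log (Real.exp t - 1), ?_⟩
      have h1 : (0:ℝ) < Real.exp t - 1 := by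
        have := Real.exp_lt_exp.mpr ht
        simp only [Real.exp_zero] at this
        linarith
      simp only [hφ]
      rw [show 2 * ((1/2) * Real.log (Real.exp t - 1)) = Real.log (Real.exp t - 1) by ring,
        Real.exp_log h1]
      rw [show 1 + (Real.exp t - 1) = Real.exp t by ring, Real.log_exp]
  have hsmul : ∀ l : ℝ, |φ' l| • g (φ l)
      = 2 * (Real.log (1 + Real.exp (2 * l)) * Real.exp (-(Real.log (1 + Real.exp (2 * l))))) := by
    intro l
    have hE : (0:ℝ) < Real.exp (2 * l) := Real.exp_pos _
    have hP : Real.exp (-(φ l)) = (1 + Real.exp (2 * l))⁻¹ := mp_exp_neg_G l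
    have h1 : (1:ℝ) - (1 + Real.exp (2 * l))⁻¹ = Real.exp (2 * l) / (1 + Real.exp (2 * l)) := by
      field_simp
      ring
    simp only [hg, smul_eq_mul, hP, h1, hφ']
    rw [abs_of_pos (by positivity)]
    have hne : (1 : ℝ) + Real.exp (2 * l) ≠ 0 := by positivity
    field_simp
    rw [mp_exp_neg_G]
    simp only [hφ]
    field_simp
  calc 2 * ∫ l : ℝ, Real.log (1 + Real.exp (2 * l)) *
        Real.exp (-(Real.log (1 + Real.exp (2 * l))))
      = ∫ l : ℝ, 2 * (Real.log (1 + Real.exp (2 * l)) *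
          Real.exp (-(Real.log (1 + Real.exp (2 * l))))) := (integral_const_mul 2 _).symm
    _ = ∫ l in Set.univ, |φ' l| • g (φ l) := by
        rw [Measure.restrict_univ]
        exact integral_congr_ae (Filter.Eventually.of_forall fun l => (hsmul l).symm)
    _ = ∫ t in φ '' Set.univ, g t :=
        (integral_image_eq_integral_abs_deriv_smul MeasurableSet.univ hφderiv hφinj g).symm
    _ = ∫ t in Set.Ioi 0, g t := by rw [hφimg]
    _ = ∫ t in Set.Ioi 0, ∑' n : ℕ, mpH n t := by
        refine setIntegral_congr_fun measurableSet_Ioi fun t ht => ?_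
        exact (mp_sum t ht).symm
    _ = ∑' n : ℕ, ∫ t in Set.Ioi 0, mpH n t := by
        refine integral_tsum (fun n => ?_) ?_
        · exact (continuous_id.mul (by continuity)).aestronglyMeasurable.restrict
        · have hlint : ∀ n : ℕ, ∫⁻ t in Set.Ioi 0, ‖mpH n t‖ₑ
              = ENNReal.ofReal (1 / ((n : ℝ) + 1) ^ 2) := by
            intro n
            rw [← mp_value_H n,
              ofReal_integral_eq_lintegral_ofReal (mp_integrable_H n) ?_]
            · refine lintegral_congr_ae ?_
              filter_upwards [self_mem_ae_restrict measurableSet_Ioi] with t ht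
              have ht0 : (0:ℝ) < t := ht
              rw [← Real.enorm_eq_ofReal (by unfold mpH; positivity)]
            · filter_upwards [self_mem_ae_restrict measurableSet_Ioi] with t ht
              have ht0 : (0:ℝ) < t := ht
              unfold mpH; positivity
          simp_rw [hlint]
          rw [← ENNReal.ofReal_tsum_of_nonneg (fun n => by positivity)
            mp_hasSum_basel.summable]
          exact ENNReal.ofReal_ne_top
    _ = ∑' n : ℕ, 1 / ((n : ℝ) + 1) ^ 2 := by simp_rw [mp_value_H]
    _ = Real.pi ^ 2 / 6 := mp_basel

/-- `G(l) = log(1 + e^{2l})` solves the Mézard–Parisi fixed point equation in dimension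
one, `G(l) = 2 ∫_{-l}^∞ e^{-G(y)} dy`, and the associated matching-length constant
`2 ∫_ℝ G(l) e^{-G(l)} dl` equals `π²/6`. -/
theorem mezard_parisi_d1 :
    (∀ l : ℝ, Real.log (1 + Real.exp (2 * l)) =
        2 * ∫ y in Set.Ici (-l), Real.exp (-(Real.log (1 + Real.exp (2 * y))))) ∧
    (2 * ∫ l : ℝ, Real.log (1 + Real.exp (2 * l)) *
        Real.exp (-(Real.log (1 + Real.exp (2 * l)))) = Real.pi ^ 2 / 6) := by
  constructor
  · intro l
    have h1 : ∫ y in Set.Ici (-l), Real.exp (-(Real.log (1 + Real.exp (2 * y))))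
        = ∫ y in Set.Ioi (-l), (1 + Real.exp (2 * y))⁻¹ := by
      rw [integral_Ici_eq_integral_Ioi]
      exact setIntegral_congr_fun measurableSet_Ioi fun y _ => mp_exp_neg_G y
    rw [h1, mp_part1]
    ring
  · exact mp_part2
end
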